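/- Let ỹ(a, W + tX) = (W̃_H + tX̃_H)ᵀ (W̃_{H-1} + tX̃_{H-1})ᵀ ⋯ (W̃₀ + tX̃₀)ᵀ a, where W̃ᵢ = S_{i+1}(a,W) Wᵢ S_i(a,W) and X̃ᵢ = S_{i+1}(a,W) Xᵢ S_i(a,W) (with S₀ the identity) are the weight and perturbation matrices with fixed ReLU switches. Then the second derivative in t at t = 0 satisfies the bound |(d²/dt²)|_{t=0} ỹ(a, W + tX)| ≤ H(H+1) · ‖W‖_*^{H−1} · ‖X‖² · ‖a‖₂. -/

import Mathlib

open scoped BigOperators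

/-- Index set for all weights of the network: a weight `w^i_{j,k}` connects
neuron `j` in layer `i` to neuron `k` in layer `i+1`. -/
abbrev WeightIdx (n : ℕ → ℕ) (H : ℕ) : Type :=
  (i : Fin (H + 1)) × (Fin (n i) × Fin (n (i + 1)))

/-- Weight space `ℝ^m`, with the Euclidean norm. -/
abbrev WeightSpace (n : ℕ → ℕ) (H : ℕ) : Type :=
  EuclideanSpace ℝ (WeightIdx n H)

/-- Activations of the feed-forward ReLU network:
`x_0 = a`, `x_{k+1} = σ(W_k^T x_k)`. -/
def netAct (n : ℕ → ℕ) (H : ℕ) (W : WeightSpace n H)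
    (a : EuclideanSpace ℝ (Fin (n 0))) : (k : ℕ) → k ≤ H + 1 → (Fin (n k) → ℝ)
  | 0, _ => a
  | k + 1, h => fun j =>
      max (∑ l : Fin (n k), W ⟨⟨k, h⟩, (l, j)⟩ * netAct n H W a k (Nat.le_of_succ_le h) l) 0

/-- Scalar output of the ReLU network, `y(a, W)`. -/
def netOut (n : ℕ → ℕ) (H : ℕ) (hout : n (H + 1) = 1) (W : WeightSpace n H)
    (a : EuclideanSpace ℝ (Fin (n 0))) : ℝ :=
  netAct n H W a (H + 1) le_rfl ⟨0, by omega⟩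

/-- Quadratic training loss `ℓ(W)`. -/
noncomputable def loss (n : ℕ → ℕ) (H N : ℕ) (hout : n (H + 1) = 1)
    (a : Fin N → EuclideanSpace ℝ (Fin (n 0)))
    (f : EuclideanSpace ℝ (Fin (n 0)) → ℝ) (W : WeightSpace n H) : ℝ :=
  (1 / (2 * (N : ℝ))) * ∑ i, (f (a i) - netOut n H hout W (a i)) ^ 2

/-- Regularized loss `ℓ_λ(W) = ℓ(W) + (λ/2)‖W‖²`. -/
noncomputable def lossReg (n : ℕ → ℕ) (H N : ℕ) (hout : n (H + 1) = 1)
    (a : Fin N → EuclideanSpace ℝ (Fin (n 0)))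
    (f : EuclideanSpace ℝ (Fin (n 0)) → ℝ) (lam : ℝ) (W : WeightSpace n H) : ℝ :=
  loss n H N hout a f W + lam / 2 * ‖W‖ ^ 2

/-- The `i`-th weight matrix `W_i` of a weight vector `W`. -/
def block (n : ℕ → ℕ) (H : ℕ) (W : WeightSpace n H) (i : Fin (H + 1)) :
    Matrix (Fin (n i)) (Fin (n (i + 1))) ℝ :=
  Matrix.of fun j k => W ⟨i, (j, k)⟩

/-- Operator norm (induced by the Euclidean norms) of a matrix. -/
noncomputable def opNorm2 {p q : ℕ} (M : Matrix (Fin p) (Fin q) ℝ) : ℝ :=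
  ‖LinearMap.toContinuousLinearMap (Matrix.toEuclideanLin M)‖

/-- `‖W‖_* = max_i ‖W_i‖₂`. -/
noncomputable def starNorm (n : ℕ → ℕ) (H : ℕ) (W : WeightSpace n H) : ℝ :=
  ⨆ i : Fin (H + 1), opNorm2 (block n H W i)

/-- The set `U(λ,θ)`. -/
noncomputable def Uset (n : ℕ → ℕ) (H N : ℕ) (hout : n (H + 1) = 1)
    (a : Fin N → EuclideanSpace ℝ (Fin (n 0)))
    (f : EuclideanSpace ℝ (Fin (n 0)) → ℝ) (lam θ r : ℝ) : Set (WeightSpace n H) :=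
  {W | Real.sqrt (loss n H N hout a f W) * starNorm n H W ^ (H - 1) <
    (lam - θ) / (Real.sqrt 2 * ((H : ℝ) * ((H : ℝ) + 1)) * r)}

/-- Activations of the network with the ReLU switches frozen at the values
`S_j(a, W)` determined by the weight `W` and the input `a`, evaluated at the
weight `V`:  `x̃_0 = a`, `x̃_{k+1} = S_{k+1}(a,W) (V_k^T x̃_k)`. -/
noncomputable def frozenAct (n : ℕ → ℕ) (H : ℕ) (W : WeightSpace n H)
    (a : EuclideanSpace ℝ (Fin (n 0))) (V : WeightSpace n H) :
    (k : ℕ) → k ≤ H + 1 → (Fin (n k) → ℝ)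
  | 0, _ => a
  | k + 1, h => fun j =>
      (if 0 < ∑ l : Fin (n k), W ⟨⟨k, h⟩, (l, j)⟩ * netAct n H W a k (Nat.le_of_succ_le h) l
        then (1 : ℝ) else 0) *
      ∑ l : Fin (n k), V ⟨⟨k, h⟩, (l, j)⟩ * frozenAct n H W a V k (Nat.le_of_succ_le h) l

/-- Scalar output `ỹ(a, V)` of the network with switches frozen as determined by `W`. -/
noncomputable def frozenOut (n : ℕ → ℕ) (H : ℕ) (hout : n (H + 1) = 1)
    (W : WeightSpace n H) (a : EuclideanSpace ℝ (Fin (n 0)))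
    (V : WeightSpace n H) : ℝ :=
  frozenAct n H W a V (H + 1) le_rfl ⟨0, by omega⟩

/-- The loss `ϕ(V)` with switches frozen as determined by `W` and the data. -/
noncomputable def frozenLoss (n : ℕ → ℕ) (H N : ℕ) (hout : n (H + 1) = 1)
    (a : Fin N → EuclideanSpace ℝ (Fin (n 0)))
    (f : EuclideanSpace ℝ (Fin (n 0)) → ℝ)
    (W : WeightSpace n H) (V : WeightSpace n H) : ℝ :=
  (1 / (2 * (N : ℝ))) * ∑ i, (f (a i) - frozenOut n H hout W (a i) V) ^ 2

section aux
open scoped Matrix.Norms.L2Operator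

noncomputable def fvNorm {m : ℕ} (v : Fin m → ℝ) : ℝ := @norm (EuclideanSpace ℝ (Fin m)) _ (WithLp.toLp 2 v)

lemma fvNorm_eq {m : ℕ} (v : Fin m → ℝ) : fvNorm v = Real.sqrt (∑ j, v j ^ 2) := by
  have := EuclideanSpace.norm_eq (𝕜 := ℝ) (n := Fin m) (WithLp.toLp 2 v : EuclideanSpace ℝ (Fin m))
  rw [fvNorm, this]
  congr 1
  exact Finset.sum_congr rfl fun j _ => by simp [Real.norm_eq_abs, sq_abs]

lemma fvNorm_nonneg {m : ℕ} (v : Fin m → ℝ) : 0 ≤ fvNorm v := norm_nonneg _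

lemma sq_fvNorm {m : ℕ} (v : Fin m → ℝ) : fvNorm v ^ 2 = ∑ j, v j ^ 2 := by
  rw [fvNorm_eq, Real.sq_sqrt]
  exact Finset.sum_nonneg fun j _ => sq_nonneg _

lemma fvNorm_zero {m : ℕ} : fvNorm (fun _ : Fin m => (0 : ℝ)) = 0 := by
  simp [fvNorm_eq]

lemma abs_le_fvNorm {m : ℕ} (v : Fin m → ℝ) (j : Fin m) : |v j| ≤ fvNorm v := by
  rw [fvNorm_eq, ← Real.sqrt_sq_eq_abs]
  exact Real.sqrt_le_sqrt (Finset.single_le_sum (fun i _ => sq_nonneg (v i)) (Finset.mem_univ j))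

lemma fvNorm_add_le {m : ℕ} (f g : Fin m → ℝ) :
    fvNorm (fun j => f j + g j) ≤ fvNorm f + fvNorm g :=
  norm_add_le (E := EuclideanSpace ℝ (Fin m)) (WithLp.toLp 2 f) (WithLp.toLp 2 g)

lemma fvNorm_le_of_sq {m : ℕ} (v : Fin m → ℝ) (c : ℝ) (hc : 0 ≤ c)
    (h : ∑ j, v j ^ 2 ≤ c ^ 2) : fvNorm v ≤ c := by
  rw [fvNorm_eq]
  calc Real.sqrt (∑ j, v j ^ 2) ≤ Real.sqrt (c ^ 2) := Real.sqrt_le_sqrt h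
  _ = c := by rw [Real.sqrt_sq hc]

lemma masked_le {p q : ℕ} (M : Matrix (Fin p) (Fin q) ℝ) (s : Fin q → ℝ)
    (hs : ∀ j, s j = 0 ∨ s j = 1) (v : Fin p → ℝ) :
    fvNorm (fun j => s j * ∑ l, M l j * v l) ≤ opNorm2 M * fvNorm v := by
  have h1 : fvNorm (fun j => s j * ∑ l, M l j * v l)
      ≤ fvNorm (fun j => ∑ l, M l j * v l) := by
    rw [fvNorm_eq, fvNorm_eq]
    apply Real.sqrt_le_sqrt
    refine Finset.sum_le_sum fun j _ => ?_
    rcases hs j with h | h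
    · simp [h]
      positivity
    · simp [h]
  refine h1.trans ?_
  have h2 : (fun j => ∑ l, M l j * v l) = Matrix.mulVec M.transpose v := by
    funext j
    simp [Matrix.mulVec, dotProduct]
  rw [h2]
  have h3 : ‖M.transpose‖ = opNorm2 M := by
    rw [← Matrix.conjTranspose_eq_transpose_of_trivial, Matrix.l2_opNorm_conjTranspose]
    rfl
  have := Matrix.l2_opNorm_mulVec M.transpose (WithLp.toLp 2 v : EuclideanSpace ℝ (Fin p))
  rw [h3] at this
  exact this

lemma frob_masked_le {p q : ℕ} (M : Matrix (Fin p) (Fin q) ℝ) (s : Fin q → ℝ)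
    (hs : ∀ j, s j = 0 ∨ s j = 1) (v : Fin p → ℝ) :
    fvNorm (fun j => s j * ∑ l, M l j * v l)
      ≤ Real.sqrt (∑ l, ∑ j, M l j ^ 2) * fvNorm v := by
  apply fvNorm_le_of_sq
  · exact mul_nonneg (Real.sqrt_nonneg _) (fvNorm_nonneg _)
  · rw [mul_pow, Real.sq_sqrt (Finset.sum_nonneg fun l _ =>
      Finset.sum_nonneg fun j _ => sq_nonneg (M l j) : (0:ℝ) ≤ ∑ l, ∑ j, M l j ^ 2), sq_fvNorm]
    calc ∑ j, (s j * ∑ l, M l j * v l) ^ 2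
        ≤ ∑ j, (∑ l, M l j * v l) ^ 2 := by
          refine Finset.sum_le_sum fun j _ => ?_
          rcases hs j with h | h
          · simp [h]
            positivity
          · simp [h]
      _ ≤ ∑ j, (∑ l, M l j ^ 2) * (∑ l, v l ^ 2) := by
          refine Finset.sum_le_sum fun j _ => ?_
          exact Finset.sum_mul_sq_le_sq_mul_sq Finset.univ (fun l => M l j) v
      _ = (∑ l, ∑ j, M l j ^ 2) * ∑ l, v l ^ 2 := by
          rw [← Finset.sum_mul, Finset.sum_comm]
end aux

lemma key_expand {p : ℕ} (k : ℕ) (t : ℝ) (Wc Xc : Fin p → ℝ) (u : ℕ → Fin p → ℝ)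
    (hu : ∀ l, u (k + 1) l = 0) :
    ∑ l, (Wc l + t * Xc l) * (∑ i ∈ Finset.range (k + 1), t ^ i * u i l)
      = ∑ i ∈ Finset.range (k + 2), t ^ i *
          ((∑ l, Wc l * u i l) +
            (∑ l, Xc l * (if i = 0 then (fun _ : Fin p => (0 : ℝ)) else u (i - 1)) l)) := by
  have e1 : ∀ l, (Wc l + t * Xc l) * (∑ i ∈ Finset.range (k + 1), t ^ i * u i l)
      = (∑ i ∈ Finset.range (k + 1), t ^ i * (Wc l * u i l))
        + (∑ i ∈ Finset.range (k + 1), t ^ (i + 1) * (Xc l * u i l)) := by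
    intro l
    rw [add_mul, Finset.mul_sum, Finset.mul_sum]
    congr 1 <;> exact Finset.sum_congr rfl fun i _ => by ring
  calc ∑ l, (Wc l + t * Xc l) * (∑ i ∈ Finset.range (k + 1), t ^ i * u i l)
      = ∑ l, ((∑ i ∈ Finset.range (k + 1), t ^ i * (Wc l * u i l))
          + ∑ i ∈ Finset.range (k + 1), t ^ (i + 1) * (Xc l * u i l)) :=
        Finset.sum_congr rfl fun l _ => e1 l
    _ = (∑ l, ∑ i ∈ Finset.range (k + 1), t ^ i * (Wc l * u i l))
        + ∑ l, ∑ i ∈ Finset.range (k + 1), t ^ (i + 1) * (Xc l * u i l) :=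
        Finset.sum_add_distrib
    _ = (∑ i ∈ Finset.range (k + 1), ∑ l, t ^ i * (Wc l * u i l))
        + ∑ i ∈ Finset.range (k + 1), ∑ l, t ^ (i + 1) * (Xc l * u i l) := by
        congr 1 <;> exact Finset.sum_comm
    _ = (∑ i ∈ Finset.range (k + 1), t ^ i * ∑ l, Wc l * u i l)
        + ∑ i ∈ Finset.range (k + 1), t ^ (i + 1) * ∑ l, Xc l * u i l := by
        congr 1 <;> exact Finset.sum_congr rfl fun i _ => (Finset.mul_sum _ _ _).symm
    _ = ∑ i ∈ Finset.range (k + 2), t ^ i *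
          ((∑ l, Wc l * u i l) +
            (∑ l, Xc l * (if i = 0 then (fun _ : Fin p => (0 : ℝ)) else u (i - 1)) l)) := by
        rw [show (∑ i ∈ Finset.range (k + 2), t ^ i *
            ((∑ l, Wc l * u i l) +
              (∑ l, Xc l * (if i = 0 then (fun _ : Fin p => (0 : ℝ)) else u (i - 1)) l)))
          = (∑ i ∈ Finset.range (k + 2), t ^ i * (∑ l, Wc l * u i l))
            + ∑ i ∈ Finset.range (k + 2), t ^ i *
                (∑ l, Xc l * (if i = 0 then (fun _ : Fin p => (0 : ℝ)) else u (i - 1)) l)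
          from by rw [← Finset.sum_add_distrib]; exact Finset.sum_congr rfl fun i _ => mul_add _ _ _]
        congr 1
        · conv_rhs => rw [Finset.sum_range_succ]
          simp [hu]
        · conv_rhs => rw [Finset.sum_range_succ']
          simp

lemma polyDeriv (K : ℕ) (c : ℕ → ℝ) :
    deriv (deriv (fun t : ℝ => ∑ i ∈ Finset.range K, t ^ i * c i)) 0
      = 2 * (if 2 < K then c 2 else 0) := by
  set p : Polynomial ℝ := ∑ i ∈ Finset.range K, Polynomial.C (c i) * Polynomial.X ^ i with hp
  have hev : (fun t : ℝ => ∑ i ∈ Finset.range K, t ^ i * c i) = fun t => p.eval t := by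
    funext t
    rw [hp, Polynomial.eval_finset_sum]
    exact Finset.sum_congr rfl fun i _ => by simp; ring
  rw [hev]
  have h1 : deriv (fun t : ℝ => p.eval t) = fun t => p.derivative.eval t :=
    funext fun t => Polynomial.deriv _
  rw [h1]
  have h2 : deriv (fun t : ℝ => p.derivative.eval t) 0 = p.derivative.derivative.eval 0 :=
    Polynomial.deriv _
  rw [h2, ← Polynomial.coeff_zero_eq_eval_zero, Polynomial.coeff_derivative,
    Polynomial.coeff_derivative]
  have h3 : p.coeff 2 = if 2 < K then c 2 else 0 := by
    rw [hp, Polynomial.finset_sum_coeff]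
    simp only [Polynomial.coeff_C_mul, Polynomial.coeff_X_pow, mul_ite, mul_one, mul_zero]
    rw [Finset.sum_ite_eq (Finset.range K) 2 c]
    simp [Finset.mem_range]
  rw [h3]
  push_cast
  ring


lemma fvNorm_euclid {m : ℕ} (v : EuclideanSpace ℝ (Fin m)) : fvNorm v = ‖v‖ := rfl

lemma fvNorm_zero' {m : ℕ} : fvNorm (0 : Fin m → ℝ) = 0 :=
  by rw [fvNorm, WithLp.toLp_zero, norm_zero]

lemma starNorm_nonneg {n : ℕ → ℕ} {H : ℕ} (W : WeightSpace n H) : 0 ≤ starNorm n H W :=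
  Real.iSup_nonneg fun _ => norm_nonneg _

lemma opNorm2_le_starNorm {n : ℕ → ℕ} {H : ℕ} (W : WeightSpace n H) (i : Fin (H + 1)) :
    opNorm2 (block n H W i) ≤ starNorm n H W :=
  le_ciSup (f := fun i => opNorm2 (block n H W i))
    (Set.Finite.bddAbove (Set.finite_range _)) i

lemma blockFrob_le {n : ℕ → ℕ} {H : ℕ} (X : WeightSpace n H) (i : Fin (H + 1)) :
    Real.sqrt (∑ l, ∑ j, X ⟨i, (l, j)⟩ ^ 2) ≤ ‖X‖ := by
  rw [EuclideanSpace.norm_eq]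
  apply Real.sqrt_le_sqrt
  calc ∑ l, ∑ j, X ⟨i, (l, j)⟩ ^ 2
      = ∑ p : Fin (n i) × Fin (n (i + 1)), X ⟨i, p⟩ ^ 2 := by
        rw [Fintype.sum_prod_type]
    _ ≤ ∑ i' : Fin (H + 1), ∑ p : Fin (n i') × Fin (n (i' + 1)), X ⟨i', p⟩ ^ 2 :=
        Finset.single_le_sum
          (f := fun i' : Fin (H + 1) => ∑ p : Fin (n i') × Fin (n (i' + 1)), X ⟨i', p⟩ ^ 2)
          (fun i' _ => Finset.sum_nonneg fun p _ => sq_nonneg _) (Finset.mem_univ i)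
    _ = ∑ idx : WeightIdx n H, X idx ^ 2 := by
        rw [← Finset.univ_sigma_univ, Finset.sum_sigma]
    _ = ∑ idx : WeightIdx n H, ‖X idx‖ ^ 2 := by
        exact Finset.sum_congr rfl fun idx _ => by rw [Real.norm_eq_abs, sq_abs]

lemma polyAct (n : ℕ → ℕ) (H : ℕ) (W X : WeightSpace n H)
    (a : EuclideanSpace ℝ (Fin (n 0))) :
    ∀ (k : ℕ) (hk : k ≤ H + 1), ∃ u : ℕ → Fin (n k) → ℝ,
      (∀ i, k < i → u i = 0) ∧
      (∀ i, fvNorm (u i) ≤ (k.choose i : ℝ) * starNorm n H W ^ (k - i) * ‖X‖ ^ i * ‖a‖) ∧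
      (∀ t : ℝ, frozenAct n H W a (W + t • X) k hk
        = fun j => ∑ i ∈ Finset.range (k + 1), t ^ i * u i j) := by
  intro k
  induction k with
  | zero =>
    intro hk
    refine ⟨fun i => if i = 0 then a else 0, ?_, ?_, ?_⟩
    · intro i hi
      beta_reduce
      rw [if_neg (by omega : ¬ i = 0)]
    · intro i
      rcases Nat.eq_zero_or_pos i with rfl | hi
      · simp [fvNorm_euclid]
      · beta_reduce
        rw [if_neg (by omega : ¬ i = 0), Nat.choose_eq_zero_of_lt hi]
        simp [fvNorm_zero']
    · intro t
      funext j
      simp [frozenAct]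
  | succ k IH =>
    intro hk
    obtain ⟨u, hzero, hbound, heval⟩ := IH (Nat.le_of_succ_le hk)
    have hw : (0 : ℝ) ≤ starNorm n H W := starNorm_nonneg W
    have hx : (0 : ℝ) ≤ ‖X‖ := norm_nonneg X
    refine ⟨fun i j =>
      (if 0 < ∑ l, W ⟨⟨k, hk⟩, (l, j)⟩ * netAct n H W a k (Nat.le_of_succ_le hk) l
        then (1 : ℝ) else 0) * (∑ l, W ⟨⟨k, hk⟩, (l, j)⟩ * u i l)
      + (if 0 < ∑ l, W ⟨⟨k, hk⟩, (l, j)⟩ * netAct n H W a k (Nat.le_of_succ_le hk) l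
        then (1 : ℝ) else 0) *
          (∑ l, X ⟨⟨k, hk⟩, (l, j)⟩ * (if i = 0 then (fun _ : Fin (n k) => (0 : ℝ))
            else u (i - 1)) l), ?_, ?_, ?_⟩
    · intro i hi
      funext j
      have h1 : u i = 0 := hzero i (by omega)
      have h2 : (if i = 0 then (fun _ : Fin (n k) => (0 : ℝ)) else u (i - 1))
          = fun _ => (0 : ℝ) := by
        rw [if_neg (by omega : ¬ i = 0)]
        have := hzero (i - 1) (by omega)
        funext l; rw [this]; rfl
      beta_reduce
      rw [h1, h2]
      simp
    · intro i
      set s : Fin (n (k + 1)) → ℝ := fun j =>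
        if 0 < ∑ l, W ⟨⟨k, hk⟩, (l, j)⟩ * netAct n H W a k (Nat.le_of_succ_le hk) l
          then (1 : ℝ) else 0 with hs_def
      have hs : ∀ j, s j = 0 ∨ s j = 1 := fun j => by
        rw [hs_def]; dsimp only; split <;> simp
      set uu : Fin (n k) → ℝ :=
        (if i = 0 then (fun _ : Fin (n k) => (0 : ℝ)) else u (i - 1)) with huu_def
      have step1 : fvNorm (fun j => s j * (∑ l, W ⟨⟨k, hk⟩, (l, j)⟩ * u i l)
            + s j * (∑ l, X ⟨⟨k, hk⟩, (l, j)⟩ * uu l))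
          ≤ starNorm n H W * fvNorm (u i) + ‖X‖ * fvNorm uu := by
        refine (fvNorm_add_le _ _).trans (add_le_add ?_ ?_)
        · refine (masked_le (block n H W ⟨k, hk⟩) s hs (u i)).trans ?_
          exact mul_le_mul_of_nonneg_right (opNorm2_le_starNorm W ⟨k, hk⟩) (fvNorm_nonneg _)
        · refine (frob_masked_le (block n H X ⟨k, hk⟩) s hs uu).trans ?_
          exact mul_le_mul_of_nonneg_right (blockFrob_le X ⟨k, hk⟩) (fvNorm_nonneg _)
      have h1 : starNorm n H W * fvNorm (u i)
          ≤ (k.choose i : ℝ) * starNorm n H W ^ (k + 1 - i) * ‖X‖ ^ i * ‖a‖ := by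
        rcases le_or_gt i k with h | h
        · have hb := hbound i
          have e : starNorm n H W ^ (k + 1 - i) = starNorm n H W * starNorm n H W ^ (k - i) := by
            rw [← pow_succ']
            congr 1
            omega
          calc starNorm n H W * fvNorm (u i)
              ≤ starNorm n H W * ((k.choose i : ℝ) * starNorm n H W ^ (k - i) * ‖X‖ ^ i * ‖a‖) :=
              mul_le_mul_of_nonneg_left hb hw
            _ = (k.choose i : ℝ) * starNorm n H W ^ (k + 1 - i) * ‖X‖ ^ i * ‖a‖ := by
              rw [e]; ring
        · rw [hzero i h, fvNorm_zero', mul_zero]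
          positivity
      rcases Nat.eq_zero_or_pos i with rfl | hi
      · have huu0 : fvNorm uu = 0 := by rw [huu_def, if_pos rfl]; exact fvNorm_zero
        calc fvNorm _ ≤ starNorm n H W * fvNorm (u 0) + ‖X‖ * fvNorm uu := step1
          _ = starNorm n H W * fvNorm (u 0) := by rw [huu0, mul_zero, add_zero]
          _ ≤ (Nat.choose k 0 : ℝ) * starNorm n H W ^ (k + 1 - 0) * ‖X‖ ^ 0 * ‖a‖ := h1
          _ = ((k + 1).choose 0 : ℝ) * starNorm n H W ^ (k + 1 - 0) * ‖X‖ ^ 0 * ‖a‖ := by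
            norm_num
      · have h2 : ‖X‖ * fvNorm uu
            ≤ (k.choose (i - 1) : ℝ) * starNorm n H W ^ (k + 1 - i) * ‖X‖ ^ i * ‖a‖ := by
          have huu : uu = u (i - 1) := by rw [huu_def, if_neg (by omega : ¬ i = 0)]
          rcases le_or_gt (i - 1) k with h | h
          · have hb := hbound (i - 1)
            have e1 : k - (i - 1) = k + 1 - i := by omega
            have e2 : ‖X‖ ^ i = ‖X‖ * ‖X‖ ^ (i - 1) := by
              rw [← pow_succ']
              congr 1
              omega
            calc ‖X‖ * fvNorm uu
                ≤ ‖X‖ * ((k.choose (i - 1) : ℝ) * starNorm n H W ^ (k - (i - 1))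
                    * ‖X‖ ^ (i - 1) * ‖a‖) := by
                  rw [huu]; exact mul_le_mul_of_nonneg_left hb hx
              _ = (k.choose (i - 1) : ℝ) * starNorm n H W ^ (k + 1 - i) * ‖X‖ ^ i * ‖a‖ := by
                  rw [e1, e2]; ring
          · rw [huu, hzero _ h, fvNorm_zero', mul_zero]
            positivity
        have hC : ((k + 1).choose i : ℝ) = (k.choose i : ℝ) + (k.choose (i - 1) : ℝ) := by
          obtain ⟨i', rfl⟩ : ∃ i', i = i' + 1 := ⟨i - 1, by omega⟩
          rw [Nat.choose_succ_succ]
          push_cast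
          simp [add_comm]
        calc fvNorm _ ≤ starNorm n H W * fvNorm (u i) + ‖X‖ * fvNorm uu := step1
          _ ≤ (k.choose i : ℝ) * starNorm n H W ^ (k + 1 - i) * ‖X‖ ^ i * ‖a‖
              + (k.choose (i - 1) : ℝ) * starNorm n H W ^ (k + 1 - i) * ‖X‖ ^ i * ‖a‖ :=
            add_le_add h1 h2
          _ = ((k + 1).choose i : ℝ) * starNorm n H W ^ (k + 1 - i) * ‖X‖ ^ i * ‖a‖ := by
            rw [hC]; ring
    · intro t
      funext j
      simp only [frozenAct]
      simp only [heval t]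
      have hV : ∀ l : Fin (n k), (W + t • X) ⟨⟨k, hk⟩, (l, j)⟩
          = W ⟨⟨k, hk⟩, (l, j)⟩ + t * X ⟨⟨k, hk⟩, (l, j)⟩ := fun l => by
        simp [PiLp.add_apply, PiLp.smul_apply, smul_eq_mul]
      simp only [hV]
      rw [key_expand k t (fun l => W ⟨⟨k, hk⟩, (l, j)⟩) (fun l => X ⟨⟨k, hk⟩, (l, j)⟩) u
        (fun l => by rw [hzero (k + 1) (Nat.lt_succ_self k)]; rfl)]
      rw [Finset.mul_sum]
      exact Finset.sum_congr rfl fun i _ => by ring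

/-- the second derivative in `t` at `t = 0` of the frozen-switch network
output `ỹ(a, W + tX)` satisfies
`|(d²/dt²)|₀ ỹ(a, W+tX)| ≤ H(H+1)·‖W‖_*^{H−1}·‖X‖²·‖a‖₂`. -/
theorem frozen_output_second_derivative_bound (n : ℕ → ℕ) (H : ℕ)
    (hout : n (H + 1) = 1) (hwidth : ∀ i, 1 ≤ i → i ≤ H → 1 < n i)
    (a : EuclideanSpace ℝ (Fin (n 0))) (W X : WeightSpace n H) :
    |deriv (deriv fun t : ℝ => frozenOut n H hout W a (W + t • X)) 0| ≤
      (H : ℝ) * ((H : ℝ) + 1) * starNorm n H W ^ (H - 1) * ‖X‖ ^ 2 * ‖a‖ := by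
  obtain ⟨u, hzero, hbound, heval⟩ := polyAct n H W X a (H + 1) le_rfl
  have hfun : (fun t : ℝ => frozenOut n H hout W a (W + t • X))
      = fun t => ∑ i ∈ Finset.range (H + 2), t ^ i * u i ⟨0, by omega⟩ := by
    funext t
    rw [frozenOut, heval t]
  rw [hfun, polyDeriv (H + 2) (fun i => u i ⟨0, by omega⟩)]
  have hw : (0 : ℝ) ≤ starNorm n H W := starNorm_nonneg W
  rcases Nat.eq_zero_or_pos H with rfl | hH
  · rw [if_neg (by omega : ¬ (2 < 0 + 2))]
    simp
  · rw [if_pos (by omega : 2 < H + 2)]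
    have hb := hbound 2
    have hco := abs_le_fvNorm (u 2) ⟨0, by omega⟩
    have hnat : (H + 1).choose 2 * 2 = (H + 1) * H := by
      rw [Nat.choose_two_right, Nat.add_sub_cancel]
      exact Nat.div_mul_cancel (by rw [Nat.mul_comm]; exact (Nat.even_mul_succ_self H).two_dvd)
    have hcast : ((H + 1).choose 2 : ℝ) * 2 = ((H : ℝ) + 1) * (H : ℝ) := by
      exact_mod_cast congrArg (fun m : ℕ => (m : ℝ)) hnat
    have he : H + 1 - 2 = H - 1 := by omega
    calc |2 * u 2 ⟨0, by omega⟩| = 2 * |u 2 ⟨0, by omega⟩| := by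
          rw [abs_mul]; norm_num
      _ ≤ 2 * fvNorm (u 2) := by linarith
      _ ≤ 2 * (((H + 1).choose 2 : ℝ) * starNorm n H W ^ (H + 1 - 2) * ‖X‖ ^ 2 * ‖a‖) := by
          linarith
      _ = (H : ℝ) * ((H : ℝ) + 1) * starNorm n H W ^ (H - 1) * ‖X‖ ^ 2 * ‖a‖ := by
          rw [he]
          linear_combination (starNorm n H W ^ (H - 1) * ‖X‖ ^ 2 * ‖a‖) * hcast
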